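/- arXiv:2210.08684 — 2 statements merged into one kernel-verified Lean document; each statement's English description precedes it below -/
import Mathlib

section
/- Let r₁, r₂ ≥ 1, n = r₁ + r₂, and let x ∈ ℝⁿ satisfy (x₁ + ⋯ + x_{r₁})/r₁ > (x_{r₁+1} + ⋯ + x_n)/r₂, i.e. the mean of the first r₁ coordinates strictly exceeds the mean of the last r₂ coordinates. Then for every real number c there exists a weakly decreasing z ∈ ℝⁿ with ‖x − z‖ < ‖x − c·𝟙‖ in the Euclidean norm; in particular, no constant vector is a nearest point to x in the closed convex cone of weakly decreasing vectors. -/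
/-- The constant vector `c·𝟙` in Euclidean space. -/
noncomputable def constVec (n : ℕ) (c : ℝ) : EuclideanSpace ℝ (Fin n) := WithLp.toLp 2 (fun _ => c)

theorem no_constant_nearest_of_separated_block_means
    (r₁ r₂ : ℕ) (hr₁ : 1 ≤ r₁) (hr₂ : 1 ≤ r₂) (n : ℕ) (hn : n = r₁ + r₂)
    (x : EuclideanSpace ℝ (Fin n))
    (hmean : (∑ i : Fin n, if (i : ℕ) < r₁ then x i else 0) / r₁
           > (∑ i : Fin n, if r₁ ≤ (i : ℕ) then x i else 0) / r₂)
    (c : ℝ) :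
    ∃ z : EuclideanSpace ℝ (Fin n),
      (∀ i j : Fin n, i ≤ j → z j ≤ z i) ∧
      ‖x - z‖ < ‖x - constVec n c‖ := by
  have hr₁R : (0:ℝ) < r₁ := by exact_mod_cast hr₁
  have hr₂R : (0:ℝ) < r₂ := by exact_mod_cast hr₂
  set v : Fin n → ℝ := fun i => if (i:ℕ) < r₁ then 1/(r₁:ℝ) else -1/(r₂:ℝ) with hv
  -- counting lemmas
  have hcount1 : ∑ i : Fin n, (if (i:ℕ) < r₁ then (1:ℝ) else 0) = r₁ := by
    rw [Fin.sum_univ_eq_sum_range (fun i => if i < r₁ then (1:ℝ) else 0)]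
    rw [Finset.sum_ite, Finset.sum_const, Finset.sum_const]
    rw [Finset.range_eq_Ico, Finset.Ico_filter_lt, min_eq_right (by omega : r₁ ≤ n)]
    simp
  have hcount2 : ∑ i : Fin n, (if r₁ ≤ (i:ℕ) then (1:ℝ) else 0) = r₂ := by
    have h : ∀ i : Fin n, (if r₁ ≤ (i:ℕ) then (1:ℝ) else 0)
        = 1 - (if (i:ℕ) < r₁ then (1:ℝ) else 0) := by
      intro i; split_ifs with h1 h2 <;> simp_all <;> omega
    rw [Finset.sum_congr rfl (fun i _ => h i), Finset.sum_sub_distrib, hcount1,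
      Finset.sum_const, Finset.card_univ]
    simp only [hn, nsmul_eq_mul, mul_one, Fintype.card_fin]
    push_cast; ring
  have hsplit : ∀ (f : Fin n → ℝ), ∑ i, f i * v i
      = (1/(r₁:ℝ)) * (∑ i : Fin n, if (i:ℕ) < r₁ then f i else 0)
        - (1/(r₂:ℝ)) * (∑ i : Fin n, if r₁ ≤ (i:ℕ) then f i else 0) := by
    intro f
    rw [Finset.mul_sum, Finset.mul_sum, ← Finset.sum_sub_distrib]
    refine Finset.sum_congr rfl (fun i _ => ?_)
    simp only [hv]
    split_ifs with h1 h2 <;> first | (exfalso; omega) | ring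
  have hsumv : ∑ i, v i = 0 := by
    have := hsplit (fun _ => 1)
    simp only [one_mul] at this
    rw [this, hcount1, hcount2]
    field_simp; ring
  set D : ℝ := ∑ i, (x i - c) * v i with hD
  have hDval : D = (∑ i : Fin n, if (i:ℕ) < r₁ then x i else 0) / r₁
      - (∑ i : Fin n, if r₁ ≤ (i:ℕ) then x i else 0) / r₂ := by
    have h1 : ∀ i : Fin n, (x i - c) * v i = x i * v i - c * v i := fun i => by ring
    rw [hD, Finset.sum_congr rfl (fun i _ => h1 i), Finset.sum_sub_distrib,
      ← Finset.mul_sum, hsumv, hsplit x]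
    have h2 : ∀ i : Fin n, (if (i:ℕ) < r₁ then x i else 0)
        = (if (i:ℕ) < r₁ then (fun j => x j) i else 0) := fun i => rfl
    ring
  have hDpos : 0 < D := by rw [hDval]; linarith [hmean]
  set V : ℝ := ∑ i, (v i)^2 with hV
  have hVpos : 0 < V := by
    refine Finset.sum_pos' (fun i _ => sq_nonneg _) ⟨⟨0, by omega⟩, Finset.mem_univ _, ?_⟩
    simp only [hv]
    rw [if_pos (by show (0:ℕ) < r₁; omega)]
    positivity
  set ε : ℝ := D / V with hε
  have hεpos : 0 < ε := div_pos hDpos hVpos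
  refine ⟨WithLp.toLp 2 (fun i => c + ε * v i), ?_, ?_⟩
  · intro i j hij
    have hij' : (i:ℕ) ≤ (j:ℕ) := hij
    have hvle : v j ≤ v i := by
      simp only [hv]
      split_ifs with h1 h2 h3 <;> try (exfalso; omega)
      · exact le_refl _
      · have : (0:ℝ) < 1/(r₁:ℝ) := by positivity
        have : -1/(r₂:ℝ) < 0 := by
          rw [neg_div]; simp only [neg_neg, Left.neg_neg_iff]; positivity
        linarith
      · exact le_refl _
    have := mul_le_mul_of_nonneg_left hvle (le_of_lt hεpos)
    simpa using by linarith
  · -- norm comparison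
    have hkey : ∑ i, (x i - (c + ε * v i))^2
        = (∑ i, (x i - c)^2) - 2*ε*D + ε^2*V := by
      have h1 : ∀ i : Fin n, (x i - (c + ε * v i))^2
          = (x i - c)^2 - 2*ε*((x i - c) * v i) + ε^2 * (v i)^2 := fun i => by ring
      rw [Finset.sum_congr rfl (fun i _ => h1 i), Finset.sum_add_distrib,
        Finset.sum_sub_distrib, ← Finset.mul_sum, ← Finset.mul_sum, hD, hV]
    have hkey2 : ∑ i, (x i - (c + ε * v i))^2 = (∑ i, (x i - c)^2) - D^2 / V := by
      rw [hkey, hε]; field_simp; ring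
    have hlt : ∑ i, (x i - (c + ε * v i))^2 < ∑ i, (x i - c)^2 := by
      rw [hkey2]
      have : 0 < D^2 / V := by positivity
      linarith
    have hsub : ∀ (y : EuclideanSpace ℝ (Fin n)) (i : Fin n), (x - y) i = x i - y i :=
      fun _ _ => rfl
    have hcv : ∀ i : Fin n, constVec n c i = c := fun _ => rfl
    rw [EuclideanSpace.norm_eq, EuclideanSpace.norm_eq]
    apply Real.sqrt_lt_sqrt (Finset.sum_nonneg fun i _ => sq_nonneg _)
    simp only [hsub, hcv, Real.norm_eq_abs, sq_abs]
    exact hlt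
end

section
/- Let r₁, r₂ ≥ 1, n = r₁ + r₂, and let λ ∈ ℝⁿ satisfy (λ₁ + ⋯ + λ_{r₁})/r₁ − (λ_{r₁+1} + ⋯ + λ_n)/r₂ > (r₁ + r₂)/2. Then for every real number c there exists a weakly decreasing z ∈ ℝⁿ with ‖(λ − ρ) − z‖ < ‖(λ − ρ) − c·𝟙‖ in the Euclidean norm; that is, the nearest point to λ − ρ in the closed convex cone of weakly decreasing vectors is not a constant vector. -/
/-- The Weyl vector `ρ` of `gl(n)`, with `i`-th coordinate `(n + 1 - 2i)/2`
(in 1-indexed notation). -/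
noncomputable def rhoVec (n : ℕ) : EuclideanSpace ℝ (Fin n) :=
  WithLp.toLp 2 (fun i => ((n : ℝ) + 1 - 2 * ((i : ℕ) + 1)) / 2)

theorem projection_not_constant_of_large_mean_gap
    (r₁ r₂ : ℕ) (hr₁ : 1 ≤ r₁) (hr₂ : 1 ≤ r₂) (n : ℕ) (hn : n = r₁ + r₂)
    (lam : EuclideanSpace ℝ (Fin n))
    (hmean : (∑ i : Fin n, if (i : ℕ) < r₁ then lam i else 0) / r₁
           - (∑ i : Fin n, if r₁ ≤ (i : ℕ) then lam i else 0) / r₂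
           > ((r₁ : ℝ) + r₂) / 2)
    (c : ℝ) :
    ∃ z : EuclideanSpace ℝ (Fin n),
      (∀ i j : Fin n, i ≤ j → z j ≤ z i) ∧
      ‖(lam - rhoVec n) - z‖ < ‖(lam - rhoVec n) - constVec n c‖ := by
  have hr₁' : (0:ℝ) < r₁ := by exact_mod_cast hr₁
  have hr₂' : (0:ℝ) < r₂ := by exact_mod_cast hr₂
  -- the direction vector
  set v : EuclideanSpace ℝ (Fin n) :=
    WithLp.toLp 2 (fun i => if (i:ℕ) < r₁ then (r₂:ℝ) else -(r₁:ℝ) : Fin n → ℝ) with hv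
  set u : EuclideanSpace ℝ (Fin n) := (lam - rhoVec n) - constVec n c with hu
  have hvle : ∀ i j : Fin n, i ≤ j → v j ≤ v i := by
    intro i j hij
    by_cases h1 : (i:ℕ) < r₁
    · by_cases h2 : (j:ℕ) < r₁
      · simp [hv, h1, h2]
      · simp only [hv, h1, h2, if_true, if_false]
        nlinarith
    · have h2 : ¬ (j:ℕ) < r₁ := fun h => h1 (lt_of_le_of_lt (by exact_mod_cast hij) h)
      simp [hv, h1, h2]
  -- inner product formula
  have hinner : ∀ x y : EuclideanSpace ℝ (Fin n),
      (inner ℝ x y : ℝ) = ∑ i, x i * y i := by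
    intro x y
    simp [PiLp.inner_apply, RCLike.inner_apply, mul_comm]
  -- notation for the two block sums
  set A : ℝ := ∑ i : Fin n, if (i:ℕ) < r₁ then lam i else 0 with hA
  set B : ℝ := ∑ i : Fin n, if r₁ ≤ (i:ℕ) then lam i else 0 with hB
  set K : ℝ := inner ℝ u v with hK
  -- the rho-part sum
  have hT : (∑ i : Fin n, (rhoVec n i + c) * v i) = r₁ * r₂ * ((r₁:ℝ) + r₂) / 2 := by
    have hg : (∑ i : Fin n, (rhoVec n i + c) * v i)
        = ∑ i ∈ Finset.range n,
          ((((n:ℝ) + 1 - 2 * ((i:ℕ) + 1)) / 2 + c) *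
            (if i < r₁ then (r₂:ℝ) else -(r₁:ℝ))) := by
      rw [← Fin.sum_univ_eq_sum_range
        (fun i => (((n:ℝ) + 1 - 2 * ((i:ℕ) + 1)) / 2 + c) *
          (if i < r₁ then (r₂:ℝ) else -(r₁:ℝ))) n]
      exact Finset.sum_congr rfl (fun i _ => by simp [rhoVec, hv])
    rw [hg, hn, Finset.sum_range_add]
    have hG1 : (∑ i ∈ Finset.range r₁, (i:ℝ)) = r₁ * (r₁ - 1) / 2 := by
      have := Finset.sum_range_id_mul_two r₁
      have h2 : ((∑ i ∈ Finset.range r₁, i) * 2 : ℝ) = (r₁:ℝ) * ((r₁:ℕ) - 1 : ℕ) := by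
        exact_mod_cast congrArg (Nat.cast : ℕ → ℝ) this
      push_cast [Nat.cast_sub hr₁] at h2
      linarith
    have hG2 : (∑ i ∈ Finset.range r₂, (i:ℝ)) = r₂ * (r₂ - 1) / 2 := by
      have := Finset.sum_range_id_mul_two r₂
      have h2 : ((∑ i ∈ Finset.range r₂, i) * 2 : ℝ) = (r₂:ℝ) * ((r₂:ℕ) - 1 : ℕ) := by
        exact_mod_cast congrArg (Nat.cast : ℕ → ℝ) this
      push_cast [Nat.cast_sub hr₂] at h2
      linarith
    have e1 : ∑ i ∈ Finset.range r₁,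
        ((((r₁ + r₂ : ℕ):ℝ) + 1 - 2 * ((i:ℕ) + 1)) / 2 + c) *
          (if i < r₁ then (r₂:ℝ) else -(r₁:ℝ))
        = ∑ i ∈ Finset.range r₁,
          (((((r₁:ℝ) + r₂) + 1 - 2) / 2 + c) * r₂ - (r₂:ℝ) * i) := by
      refine Finset.sum_congr rfl (fun i hi => ?_)
      rw [if_pos (Finset.mem_range.mp hi)]
      push_cast
      ring
    have e2 : ∑ i ∈ Finset.range r₂,
        ((((r₁ + r₂ : ℕ):ℝ) + 1 - 2 * (((r₁ + i :ℕ)) + 1)) / 2 + c) *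
          (if r₁ + i < r₁ then (r₂:ℝ) else -(r₁:ℝ))
        = ∑ i ∈ Finset.range r₂,
          (((((r₁:ℝ) + r₂) + 1 - 2 * ((r₁:ℝ) + 1)) / 2 + c) * (-(r₁:ℝ)) + (r₁:ℝ) * i) := by
      refine Finset.sum_congr rfl (fun i hi => ?_)
      rw [if_neg (by omega)]
      push_cast
      ring
    rw [e1, e2]
    simp only [Finset.sum_sub_distrib, Finset.sum_add_distrib, ← Finset.mul_sum,
      Finset.sum_const, Finset.card_range, nsmul_eq_mul, hG1, hG2]
    ring
  -- compute the inner product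
  have hKval : K = r₂ * A - r₁ * B - r₁ * r₂ * ((r₁:ℝ) + r₂) / 2 := by
    rw [hK, hinner]
    have : (∑ i : Fin n, u i * v i)
        = ∑ i : Fin n, ((if (i:ℕ) < r₁ then (r₂:ℝ) * lam i else 0)
          - (if r₁ ≤ (i:ℕ) then (r₁:ℝ) * lam i else 0)
          - (rhoVec n i + c) * v i) := by
      refine Finset.sum_congr rfl (fun i _ => ?_)
      have hui : u i = lam i - rhoVec n i - c := by
        simp [hu, constVec]
      by_cases h1 : (i:ℕ) < r₁
      · rw [if_pos h1, if_neg (by omega)]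
        simp only [hv, if_pos h1, hui]
        ring
      · rw [if_neg h1, if_pos (by omega)]
        simp only [hv, if_neg h1, hui]
        ring
    rw [this, Finset.sum_sub_distrib, Finset.sum_sub_distrib, hT]
    have hA' : (∑ i : Fin n, if (i:ℕ) < r₁ then (r₂:ℝ) * lam i else 0) = r₂ * A := by
      rw [hA, Finset.mul_sum]
      exact Finset.sum_congr rfl (fun i _ => by split <;> simp
      )
    have hB' : (∑ i : Fin n, if r₁ ≤ (i:ℕ) then (r₁:ℝ) * lam i else 0) = r₁ * B := by
      rw [hB, Finset.mul_sum]
      exact Finset.sum_congr rfl (fun i _ => by split <;> simp)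
    rw [hA', hB']
  -- positivity of K
  have hKpos : 0 < K := by
    rw [hKval]
    have hm : r₂ * A - r₁ * B = (r₁:ℝ) * r₂ * (A / r₁ - B / r₂) := by
      field_simp
    rw [hm]
    have := hmean
    nlinarith [mul_pos hr₁' hr₂']
  -- v is nonzero
  have hnpos : 0 < n := by omega
  have hv0 : v ≠ 0 := by
    intro h
    have := congrFun (congrArg WithLp.ofLp h) ⟨0, hnpos⟩
    simp only [hv, WithLp.ofLp_toLp] at this
    rw [if_pos (by simpa using Nat.one_le_iff_ne_zero.mp hr₁ |>.bot_lt)] at this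
    simp at this
    linarith
  have hQpos : (0:ℝ) < ‖v‖ ^ 2 := pow_pos (norm_pos_iff.mpr hv0) 2
  set t : ℝ := K / ‖v‖ ^ 2 with ht
  have htpos : 0 < t := div_pos hKpos hQpos
  refine ⟨constVec n c + t • v, ?_, ?_⟩
  · intro i j hij
    have : (constVec n c + t • v) i = c + t * v i := by simp [constVec]
    rw [this, show (constVec n c + t • v) j = c + t * v j by simp [constVec]]
    have := mul_le_mul_of_nonneg_left (hvle i j hij) htpos.le
    linarith
  · have hdiff : (lam - rhoVec n) - (constVec n c + t • v) = u - t • v := by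
      rw [hu]; abel
    rw [hdiff]
    have hsq : ‖u - t • v‖ ^ 2 = ‖u‖ ^ 2 - K ^ 2 / ‖v‖ ^ 2 := by
      rw [norm_sub_sq_real, real_inner_smul_right, ← hK, norm_smul]
      rw [Real.norm_eq_abs, abs_of_pos htpos, mul_pow, ht]
      field_simp
      ring
    have hlt : ‖u - t • v‖ ^ 2 < ‖u‖ ^ 2 := by
      rw [hsq]
      have : 0 < K ^ 2 / ‖v‖ ^ 2 := div_pos (by positivity) hQpos
      linarith
    rw [hu] at hlt ⊢
    exact lt_of_pow_lt_pow_left₀ 2 (norm_nonneg _) hlt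
end
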